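/- arXiv:2510.06944 — 4 statements merged into one kernel-verified Lean document; each statement's English description precedes it below -/
import Mathlib

section
/- The operator 𝔸 is closed in Y: if (uₙ,vₙ,wₙ) ∈ D(𝔸) for all n, (uₙ,vₙ,wₙ) → (u,v,w) in Y, and 𝔸(uₙ,vₙ,wₙ) → (f,g,h) in Y, then (u,v,w) ∈ D(𝔸) and 𝔸(u,v,w) = (f,g,h). -/
open Filter Topology

noncomputable section

local notation "⟪" x ", " y "⟫" => @inner ℝ _ _ x y

variable {X : Type*} [NormedAddCommGroup X] [InnerProductSpace ℝ X] [CompleteSpace X]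

/-- Membership in the fractional power space `X^{1/2}` (here `2σ = 1`). -/
def memHalf (e : HilbertBasis ℕ ℝ X) (lam : ℕ → ℝ) (φ : X) : Prop :=
  Summable fun k => lam k * ⟪φ, e k⟫ ^ 2

/-- Membership in the fractional power space `X^1` (here `2σ = 2`). -/
def memOne (e : HilbertBasis ℕ ℝ X) (lam : ℕ → ℝ) (φ : X) : Prop :=
  Summable fun k => lam k ^ 2 * ⟪φ, e k⟫ ^ 2

/-- The squared `X^{1/2}`-norm: `‖φ‖²_{X^{1/2}} = ∑_k λ_k ⟨φ,e_k⟩²`. -/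
def nHalfSq (e : HilbertBasis ℕ ℝ X) (lam : ℕ → ℝ) (φ : X) : ℝ :=
  ∑' k, lam k * ⟪φ, e k⟫ ^ 2

/-- The squared `X^{-1/2}`-norm of an element of `X`: `∑_k λ_k⁻¹ ⟨φ,e_k⟩²`. -/
def nNegSq (e : HilbertBasis ℕ ℝ X) (lam : ℕ → ℝ) (φ : X) : ℝ :=
  ∑' k, (lam k)⁻¹ * ⟪φ, e k⟫ ^ 2

/-- The diagonal operator `A φ = ∑_k λ_k ⟨φ,e_k⟩ e_k`. -/
def Aop (e : HilbertBasis ℕ ℝ X) (lam : ℕ → ℝ) (φ : X) : X :=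
  ∑' k, (lam k * ⟪φ, e k⟫) • e k

/-- The inverse operator `A⁻¹ φ = ∑_k λ_k⁻¹ ⟨φ,e_k⟩ e_k`. -/
def Ainv (e : HilbertBasis ℕ ℝ X) (lam : ℕ → ℝ) (φ : X) : X :=
  ∑' k, ((lam k)⁻¹ * ⟪φ, e k⟫) • e k

/-- The norm of `Y = X^{1/2} × X^{1/2} × X`. -/
def Ynorm (e : HilbertBasis ℕ ℝ X) (lam : ℕ → ℝ) (u v w : X) : ℝ :=
  Real.sqrt (nHalfSq e lam u + nHalfSq e lam v + ‖w‖ ^ 2)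


section Helpers
set_option linter.unusedSectionVars false
set_option linter.unusedVariables false

lemma parseval_hasSum (e : HilbertBasis ℕ ℝ X) (x : X) :
    HasSum (fun k => ⟪x, e k⟫ ^ 2) (‖x‖ ^ 2) := by
  have := e.hasSum_inner_mul_inner x x
  simpa [real_inner_comm x, sq, real_inner_self_eq_norm_sq] using this

lemma summable_smul_basis (e : HilbertBasis ℕ ℝ X) (c : ℕ → ℝ)
    (hc : Summable fun k => c k ^ 2) : Summable fun k => c k • (e k : X) := by
  have hfam := e.orthonormal.orthogonalFamily
  have := (hfam.summable_iff_norm_sq_summable c).2 (by simpa [Real.norm_eq_abs, sq_abs] using hc)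
  simpa [LinearIsometry.toSpanSingleton_apply] using this

lemma inner_tsum_basis (e : HilbertBasis ℕ ℝ X) (c : ℕ → ℝ) {S : X}
    (hS : HasSum (fun k => c k • (e k : X)) S) (k : ℕ) : ⟪S, e k⟫ = c k := by
  have h2 : HasSum (fun j => ⟪(e k : X), c j • (e j : X)⟫) ⟪(e k : X), S⟫ :=
    hS.mapL (innerSL ℝ (e k))
  have horth := e.orthonormal
  rw [orthonormal_iff_ite] at horth
  have h3 : ∀ j, ⟪(e k : X), c j • (e j : X)⟫ = if j = k then c j else 0 := by
    intro j
    rw [real_inner_smul_right, horth k j]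
    by_cases hj : j = k
    · simp [hj]
    · simp [hj, Ne.symm hj]
  rw [real_inner_comm]
  have h4 : HasSum (fun j => if j = k then c j else 0) ⟪(e k : X), S⟫ := by
    simpa [h3] using h2
  have h5 : HasSum (fun j => if j = k then c j else 0) (c k) := by
    convert hasSum_ite_eq k (c k) using 2 with j
    by_cases hj : j = k <;> simp [hj]
  exact h4.unique h5

lemma memHalf_sub' (e : HilbertBasis ℕ ℝ X) (lam : ℕ → ℝ) (hlam : ∀ k, 0 ≤ lam k)
    {φ ψ : X} (hφ : memHalf e lam φ) (hψ : memHalf e lam ψ) :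
    memHalf e lam (φ - ψ) := by
  refine Summable.of_nonneg_of_le (fun k => mul_nonneg (hlam k) (sq_nonneg _))
    (fun k => ?_) ((hφ.mul_left 2).add (hψ.mul_left 2))
  rw [inner_sub_left]
  have h1 := sq_nonneg (⟪φ, e k⟫ + ⟪ψ, e k⟫)
  nlinarith [hlam k, sq_nonneg (⟪φ, e k⟫ - ⟪ψ, e k⟫), mul_nonneg (hlam k) h1]

lemma nHalfSq_nonneg' (e : HilbertBasis ℕ ℝ X) (lam : ℕ → ℝ) (hlam : ∀ k, 0 ≤ lam k) (φ : X) :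
    0 ≤ nHalfSq e lam φ :=
  tsum_nonneg fun k => mul_nonneg (hlam k) (sq_nonneg _)

lemma norm_sq_le_nHalfSq' (e : HilbertBasis ℕ ℝ X) (lam : ℕ → ℝ) {lam0 : ℝ}
    (hlam0 : 0 < lam0) (hlam : ∀ k, lam0 ≤ lam k) {φ : X} (hφ : memHalf e lam φ) :
    lam0 * ‖φ‖ ^ 2 ≤ nHalfSq e lam φ := by
  have hp := parseval_hasSum e φ
  have h1 : lam0 * ‖φ‖ ^ 2 = ∑' k, lam0 * ⟪φ, e k⟫ ^ 2 := by
    rw [tsum_mul_left, hp.tsum_eq]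
  rw [h1]
  exact Summable.tsum_le_tsum (fun k => mul_le_mul_of_nonneg_right (hlam k) (sq_nonneg _))
    (hp.summable.mul_left lam0) hφ

lemma tendsto_of_norm_sq_tendsto {φ : ℕ → X} (h : Tendsto (fun n => ‖φ n‖ ^ 2) atTop (𝓝 0)) :
    Tendsto φ atTop (𝓝 0) := by
  rw [tendsto_zero_iff_norm_tendsto_zero]
  have := (Real.continuous_sqrt.tendsto 0).comp h
  simpa [Function.comp_def, Real.sqrt_sq_eq_abs, abs_norm] using this

lemma Ynorm_components (e : HilbertBasis ℕ ℝ X) (lam : ℕ → ℝ) {lam0 : ℝ}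
    (hlam0 : 0 < lam0) (hlam : ∀ k, lam0 ≤ lam k)
    (a b c : ℕ → X) (ha : ∀ n, memHalf e lam (a n)) (hb : ∀ n, memHalf e lam (b n))
    (h : Tendsto (fun n => Ynorm e lam (a n) (b n) (c n)) atTop (𝓝 0)) :
    Tendsto a atTop (𝓝 0) ∧ Tendsto b atTop (𝓝 0) ∧ Tendsto c atTop (𝓝 0) := by
  have hlamnn : ∀ k, 0 ≤ lam k := fun k => hlam0.le.trans (hlam k)
  set S : ℕ → ℝ := fun n => nHalfSq e lam (a n) + nHalfSq e lam (b n) + ‖c n‖ ^ 2 with hSdef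
  have hSnn : ∀ n, 0 ≤ S n := fun n =>
    add_nonneg (add_nonneg (nHalfSq_nonneg' e lam hlamnn _) (nHalfSq_nonneg' e lam hlamnn _))
      (sq_nonneg _)
  have hY2 : Tendsto (fun n => Ynorm e lam (a n) (b n) (c n) ^ 2) atTop (𝓝 0) := by
    have := h.mul h
    simpa [sq] using this
  have hS : Tendsto S atTop (𝓝 0) := by
    refine hY2.congr fun n => ?_
    rw [Ynorm, Real.sq_sqrt (hSnn n)]
  have hna : Tendsto (fun n => nHalfSq e lam (a n)) atTop (𝓝 0) := by
    refine squeeze_zero (fun n => nHalfSq_nonneg' e lam hlamnn _) (fun n => ?_) hS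
    have h1 := nHalfSq_nonneg' e lam hlamnn (b n)
    have h2 := sq_nonneg ‖c n‖
    simp only [hSdef]; linarith
  have hnb : Tendsto (fun n => nHalfSq e lam (b n)) atTop (𝓝 0) := by
    refine squeeze_zero (fun n => nHalfSq_nonneg' e lam hlamnn _) (fun n => ?_) hS
    have h1 := nHalfSq_nonneg' e lam hlamnn (a n)
    have h2 := sq_nonneg ‖c n‖
    simp only [hSdef]; linarith
  have hnc : Tendsto (fun n => ‖c n‖ ^ 2) atTop (𝓝 0) := by
    refine squeeze_zero (fun n => sq_nonneg _) (fun n => ?_) hS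
    have h1 := nHalfSq_nonneg' e lam hlamnn (a n)
    have h2 := nHalfSq_nonneg' e lam hlamnn (b n)
    simp only [hSdef]; linarith
  have key : ∀ (x : ℕ → X), (∀ n, memHalf e lam (x n)) →
      Tendsto (fun n => nHalfSq e lam (x n)) atTop (𝓝 0) → Tendsto x atTop (𝓝 0) := by
    intro x hx hnx
    refine tendsto_of_norm_sq_tendsto ?_
    have hb2 : Tendsto (fun n => nHalfSq e lam (x n) * lam0⁻¹) atTop (𝓝 0) := by
      simpa using hnx.mul_const lam0⁻¹
    refine squeeze_zero (fun n => sq_nonneg _) (fun n => ?_) hb2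
    have h1 := norm_sq_le_nHalfSq' e lam hlam0 hlam (hx n)
    calc ‖x n‖ ^ 2 = lam0 * ‖x n‖ ^ 2 * lam0⁻¹ := by field_simp
      _ ≤ nHalfSq e lam (x n) * lam0⁻¹ :=
        mul_le_mul_of_nonneg_right h1 (inv_nonneg.2 hlam0.le)
  exact ⟨key a ha hna, key b hb hnb, tendsto_of_norm_sq_tendsto hnc⟩

end Helpers

/-- The operator `𝔸(u,v,w) = (v, w, -αw - A(βv+γu+δw))` with domain
`D(𝔸) = {(u,v,w) ∈ Y : w ∈ X^{1/2}, βv+γu+δw ∈ X¹}` is closed in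
`Y = X^{1/2} × X^{1/2} × X`: if `(uₙ,vₙ,wₙ) ∈ D(𝔸)`, `(uₙ,vₙ,wₙ) → (u,v,w)` in `Y`
and `𝔸(uₙ,vₙ,wₙ) → (f,g,h)` in `Y`, then `(u,v,w) ∈ D(𝔸)` and `𝔸(u,v,w) = (f,g,h)`. -/
theorem operator_A_closed
    (e : HilbertBasis ℕ ℝ X) (lam : ℕ → ℝ) (lam0 : ℝ)
    (hlam0 : 0 < lam0) (hlam : ∀ k, lam0 ≤ lam k)
    (α β γ δ : ℝ) (hα : 0 < α) (hβ : 0 < β) (hγ : 0 < γ) (hδ : 0 < δ)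
    (u v w : ℕ → X)
    (hdom : ∀ n, memHalf e lam (u n) ∧ memHalf e lam (v n) ∧ memHalf e lam (w n) ∧
      memOne e lam (β • v n + γ • u n + δ • w n))
    (U V W f g h : X)
    (hU : memHalf e lam U) (hV : memHalf e lam V)
    (hf : memHalf e lam f) (hg : memHalf e lam g)
    (hconv : Tendsto (fun n => Ynorm e lam (u n - U) (v n - V) (w n - W)) atTop (𝓝 0))
    (hconvA : Tendsto (fun n => Ynorm e lam (v n - f) (w n - g)
        (((-α) • w n - Aop e lam (β • v n + γ • u n + δ • w n)) - h)) atTop (𝓝 0)) :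
    memHalf e lam W ∧ memOne e lam (β • V + γ • U + δ • W) ∧
      V = f ∧ W = g ∧ (-α) • W - Aop e lam (β • V + γ • U + δ • W) = h := by
  have hlamnn : ∀ k, 0 ≤ lam k := fun k => hlam0.le.trans (hlam k)
  -- convergence of u, v, w from hconv
  obtain ⟨hu0, hv0, hw0⟩ := Ynorm_components e lam hlam0 hlam
    (fun n => u n - U) (fun n => v n - V) (fun n => w n - W)
    (fun n => memHalf_sub' e lam hlamnn (hdom n).1 hU)
    (fun n => memHalf_sub' e lam hlamnn (hdom n).2.1 hV) hconv
  have huU : Tendsto u atTop (𝓝 U) := tendsto_sub_nhds_zero_iff.1 hu0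
  have hvV : Tendsto v atTop (𝓝 V) := tendsto_sub_nhds_zero_iff.1 hv0
  have hwW : Tendsto w atTop (𝓝 W) := tendsto_sub_nhds_zero_iff.1 hw0
  -- convergence from hconvA
  set T : ℕ → X := fun n => Aop e lam (β • v n + γ • u n + δ • w n) with hTdef
  obtain ⟨hv0', hw0', hA0⟩ := Ynorm_components e lam hlam0 hlam
    (fun n => v n - f) (fun n => w n - g)
    (fun n => ((-α) • w n - T n) - h)
    (fun n => memHalf_sub' e lam hlamnn (hdom n).2.1 hf)
    (fun n => memHalf_sub' e lam hlamnn (hdom n).2.2.1 hg) hconvA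
  have hvf : Tendsto v atTop (𝓝 f) := tendsto_sub_nhds_zero_iff.1 hv0'
  have hwg : Tendsto w atTop (𝓝 g) := tendsto_sub_nhds_zero_iff.1 hw0'
  have hVf : V = f := tendsto_nhds_unique hvV hvf
  have hWg : W = g := tendsto_nhds_unique hwW hwg
  -- T n converges to L
  set L : X := (-α) • W - h with hLdef
  have hT : Tendsto T atTop (𝓝 L) := by
    have h1 : Tendsto (fun n => (-α) • w n - h - (((-α) • w n - T n) - h)) atTop
        (𝓝 ((-α) • W - h - 0)) := ((hwW.const_smul (-α)).sub_const h).sub hA0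
    rw [sub_zero] at h1
    refine h1.congr fun n => ?_
    abel
  -- z n converges to Z
  set z : ℕ → X := fun n => β • v n + γ • u n + δ • w n with hzdef
  set Z : X := β • V + γ • U + δ • W with hZdef
  have hzZ : Tendsto z atTop (𝓝 Z) :=
    ((hvV.const_smul β).add (huU.const_smul γ)).add (hwW.const_smul δ)
  -- coefficients of T n
  have hsumn : ∀ n, HasSum (fun j => (lam j * ⟪z n, e j⟫) • (e j : X)) (T n) := by
    intro n
    have hsq : Summable fun j => (lam j * ⟪z n, e j⟫) ^ 2 := by
      simpa [mul_pow, memOne, hzdef] using (hdom n).2.2.2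
    have := (summable_smul_basis e _ hsq).hasSum
    simpa [hTdef, Aop] using this
  have hcoefn : ∀ n k, ⟪T n, e k⟫ = lam k * ⟪z n, e k⟫ :=
    fun n k => inner_tsum_basis e _ (hsumn n) k
  -- limiting coefficients
  have hcoef : ∀ k, ⟪L, e k⟫ = lam k * ⟪Z, e k⟫ := by
    intro k
    have hL1 : Tendsto (fun n => ⟪T n, e k⟫) atTop (𝓝 ⟪L, e k⟫) :=
      hT.inner tendsto_const_nhds
    have hL2 : Tendsto (fun n => lam k * ⟪z n, e k⟫) atTop (𝓝 (lam k * ⟪Z, e k⟫)) :=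
      (hzZ.inner tendsto_const_nhds).const_mul (lam k)
    exact tendsto_nhds_unique (hL1.congr fun n => hcoefn n k) hL2
  -- memOne Z
  have hmemOne : memOne e lam Z := by
    refine ((parseval_hasSum e L).summable).congr fun k => ?_
    rw [hcoef k, mul_pow]
  -- Aop Z = L
  have hAZ : Aop e lam Z = L := by
    have hrep := e.hasSum_repr L
    have heq : (fun k => (lam k * ⟪Z, e k⟫) • (e k : X)) = fun k => e.repr L k • (e k : X) := by
      funext k
      rw [e.repr_apply_apply, ← hcoef k, real_inner_comm]
    have hS : HasSum (fun k => (lam k * ⟪Z, e k⟫) • (e k : X)) L := by rw [heq]; exact hrep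
    rw [Aop]
    exact hS.tsum_eq
  refine ⟨?_, hmemOne, hVf, hWg, ?_⟩
  · rw [hWg]; exact hg
  · rw [hAZ, hLdef, sub_sub_cancel]
end
end

section
/- Zero belongs to the resolvent set of 𝔸: the operator 𝔸 : D(𝔸) → Y is bijective, its inverse is given explicitly by 𝔸⁻¹(u,v,w) = ( −γ⁻¹(βu + δv + A⁻¹(αv + w)), u, v ) for (u,v,w) ∈ Y, and there exists a constant C > 0 such that ‖𝔸⁻¹(u,v,w)‖_Y ≤ C ‖(u,v,w)‖_Y for all (u,v,w) ∈ Y. -/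
open Filter Topology

noncomputable section

local notation "⟪" x ", " y "⟫" => @inner ℝ _ _ x y

variable {X : Type*} [NormedAddCommGroup X] [InnerProductSpace ℝ X] [CompleteSpace X]

section Helpers
open ENNReal
set_option linter.unusedSectionVars false
set_option linter.unusedVariables false
lemma hasSum_coeffSq (e : HilbertBasis ℕ ℝ X) (φ : X) :
    HasSum (fun k => ⟪φ, e k⟫ ^ 2) (‖φ‖ ^ 2) := by
  have h := e.hasSum_inner_mul_inner φ φ
  have h1 : (fun k => ⟪φ, e k⟫ * ⟪e k, φ⟫) = fun k => ⟪φ, e k⟫ ^ 2 := by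
    funext k; rw [real_inner_comm φ (e k)]; ring
  rw [h1, real_inner_self_eq_norm_sq] at h
  exact h

lemma summable_coeffSq (e : HilbertBasis ℕ ℝ X) (φ : X) :
    Summable fun k => ⟪φ, e k⟫ ^ 2 := (hasSum_coeffSq e φ).summable

lemma exists_rep (e : HilbertBasis ℕ ℝ X) (c : ℕ → ℝ)
    (hc : Summable fun k => c k ^ 2) :
    ∃ ψ : X, HasSum (fun k => c k • e k) ψ ∧ ∀ j, ⟪ψ, e j⟫ = c j := by
  have hmem : Memℓp c 2 := by
    apply memℓp_gen
    have : (fun k => ‖c k‖ ^ (2 : ℝ≥0∞).toReal) = fun k => c k ^ 2 := by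
      funext k
      simp [Real.rpow_natCast]
    rw [this]; exact hc
  refine ⟨e.repr.symm ⟨c, hmem⟩, e.hasSum_repr_symm ⟨c, hmem⟩, fun j => ?_⟩
  have := e.repr_apply_apply (e.repr.symm ⟨c, hmem⟩) j
  rw [LinearIsometryEquiv.apply_symm_apply] at this
  rw [real_inner_comm, ← this]

lemma inner_tsum_smul (e : HilbertBasis ℕ ℝ X) (c : ℕ → ℝ)
    (hc : Summable fun k => c k ^ 2) (j : ℕ) :
    ⟪(∑' k, c k • e k : X), e j⟫ = c j := by
  obtain ⟨ψ, h1, h2⟩ := exists_rep e c hc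
  rw [h1.tsum_eq]; exact h2 j

lemma ainv_coeff_summable (e : HilbertBasis ℕ ℝ X) (lam : ℕ → ℝ) (lam0 : ℝ)
    (hlam0 : 0 < lam0) (hlam : ∀ k, lam0 ≤ lam k) (ψ : X) :
    Summable fun k => ((lam k)⁻¹ * ⟪ψ, e k⟫) ^ 2 := by
  apply Summable.of_nonneg_of_le (fun k => sq_nonneg _)
    (fun k => ?_) ((summable_coeffSq e ψ).mul_left (lam0⁻¹ ^ 2))
  have h1 : (lam k)⁻¹ ≤ lam0⁻¹ := by
    apply inv_anti₀ hlam0 (hlam k)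
  have h2 : (0:ℝ) ≤ (lam k)⁻¹ := inv_nonneg.2 (le_trans hlam0.le (hlam k))
  have h3 : ((lam k)⁻¹)^2 ≤ (lam0⁻¹)^2 := pow_le_pow_left₀ h2 h1 2
  calc ((lam k)⁻¹ * ⟪ψ, e k⟫) ^ 2 = ((lam k)⁻¹)^2 * ⟪ψ, e k⟫^2 := by ring
    _ ≤ (lam0⁻¹)^2 * ⟪ψ, e k⟫^2 := by nlinarith [sq_nonneg ⟪ψ, e k⟫]

lemma inner_Ainv (e : HilbertBasis ℕ ℝ X) (lam : ℕ → ℝ) (lam0 : ℝ)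
    (hlam0 : 0 < lam0) (hlam : ∀ k, lam0 ≤ lam k) (ψ : X) (j : ℕ) :
    ⟪Ainv e lam ψ, e j⟫ = (lam j)⁻¹ * ⟪ψ, e j⟫ :=
  inner_tsum_smul e _ (ainv_coeff_summable e lam lam0 hlam0 hlam ψ) j

lemma inner_Aop (e : HilbertBasis ℕ ℝ X) (lam : ℕ → ℝ) (φ : X)
    (hφ : memOne e lam φ) (j : ℕ) :
    ⟪Aop e lam φ, e j⟫ = lam j * ⟪φ, e j⟫ := by
  apply inner_tsum_smul e _ ?_ j
  apply hφ.congr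
  intro k; ring

lemma ext_inner_basis (e : HilbertBasis ℕ ℝ X) {φ χ : X}
    (h : ∀ k, ⟪φ, e k⟫ = ⟪χ, e k⟫) : φ = χ := by
  rw [← sub_eq_zero, ← inner_self_eq_zero (𝕜 := ℝ)]
  have hs := hasSum_coeffSq e (φ - χ)
  have h0 : (fun k => ⟪φ - χ, e k⟫ ^ 2) = fun _ => (0:ℝ) := by
    funext k; rw [inner_sub_left, h k, sub_self]; ring
  rw [h0] at hs
  have : ‖φ - χ‖ ^ 2 = 0 := hs.unique hasSum_zero
  rw [real_inner_self_eq_norm_sq, this]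

lemma three_sq' (a b c : ℝ) : (a+b+c)^2 ≤ 3*(a^2+b^2+c^2) := by
  nlinarith [sq_nonneg (a-b), sq_nonneg (a-c), sq_nonneg (b-c)]

lemma two_sq' (a b : ℝ) : (a+b)^2 ≤ 2*(a^2+b^2) := by nlinarith [sq_nonneg (a-b)]

lemma key0 (L t l α β δ U V W : ℝ) (hLt : L * t = 1) (ht0 : 0 ≤ t)
    (htl : t ≤ l) (htl2 : t ≤ l*l*L) (hL0 : 0 ≤ L) :
    L * (β*U + δ*V + t*(α*V+W))^2 ≤
      (3*β^2)*(L*U^2) + (3*δ^2+6*α^2*l^2)*(L*V^2) + (6*l)*W^2 := by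
  have A1 : L * (β*U + δ*V + t*(α*V+W))^2
      ≤ L * (3*((β*U)^2+(δ*V)^2+(t*(α*V+W))^2)) :=
    mul_le_mul_of_nonneg_left (three_sq' _ _ _) hL0
  have h4 : L * (t*(α*V+W))^2 = t*(α*V+W)^2 := by
    linear_combination (t*(α*V+W)^2) * hLt
  have A2 : t*(α*V+W)^2 ≤ t*(2*((α*V)^2+W^2)) :=
    mul_le_mul_of_nonneg_left (two_sq' _ _) ht0
  have A3 : t*V^2 ≤ (l*l*L)*V^2 := mul_le_mul_of_nonneg_right htl2 (sq_nonneg V)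
  have A4 : t*W^2 ≤ l*W^2 := mul_le_mul_of_nonneg_right htl (sq_nonneg W)
  nlinarith [A1, A2, A3, A4, h4]

lemma inner_x (e : HilbertBasis ℕ ℝ X) (lam : ℕ → ℝ) (lam0 : ℝ)
    (hlam0 : 0 < lam0) (hlam : ∀ k, lam0 ≤ lam k)
    (α β γ δ : ℝ) (u v w : X) (k : ℕ) :
    ⟪(-γ⁻¹) • (β • u + δ • v + Ainv e lam (α • v + w)), e k⟫
      = -γ⁻¹ * (β * ⟪u, e k⟫ + δ * ⟪v, e k⟫
          + (lam k)⁻¹ * (α * ⟪v, e k⟫ + ⟪w, e k⟫)) := by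
  rw [real_inner_smul_left, inner_add_left, inner_add_left,
    real_inner_smul_left, real_inner_smul_left,
    inner_Ainv e lam lam0 hlam0 hlam, inner_add_left, real_inner_smul_left]

lemma xbound (e : HilbertBasis ℕ ℝ X) (lam : ℕ → ℝ) (lam0 : ℝ)
    (hlam0 : 0 < lam0) (hlam : ∀ k, lam0 ≤ lam k)
    (α β γ δ : ℝ) (hγ : 0 < γ) (u v w : X) (k : ℕ) :
    lam k * ⟪(-γ⁻¹) • (β • u + δ • v + Ainv e lam (α • v + w)), e k⟫ ^ 2 ≤
      (γ⁻¹^2*(3*β^2)) * (lam k * ⟪u, e k⟫^2)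
      + (γ⁻¹^2*(3*δ^2+6*α^2*lam0⁻¹^2)) * (lam k * ⟪v, e k⟫^2)
      + (γ⁻¹^2*(6*lam0⁻¹)) * ⟪w, e k⟫^2 := by
  have hk0 : 0 < lam k := lt_of_lt_of_le hlam0 (hlam k)
  have hLt : lam k * (lam k)⁻¹ = 1 := mul_inv_cancel₀ hk0.ne'
  have ht0 : (0:ℝ) ≤ (lam k)⁻¹ := inv_nonneg.2 hk0.le
  have htl : (lam k)⁻¹ ≤ lam0⁻¹ := inv_anti₀ hlam0 (hlam k)
  have h1 : lam0⁻¹ * lam0 = 1 := inv_mul_cancel₀ hlam0.ne'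
  have htl2 : (lam k)⁻¹ ≤ lam0⁻¹ * lam0⁻¹ * lam k := by
    calc (lam k)⁻¹ ≤ lam0⁻¹ := htl
      _ = lam0⁻¹ * (lam0⁻¹ * lam0) := by rw [h1]; ring
      _ ≤ lam0⁻¹ * lam0⁻¹ * lam k := by
          rw [← mul_assoc]
          exact mul_le_mul_of_nonneg_left (hlam k)
            (mul_nonneg (inv_nonneg.2 hlam0.le) (inv_nonneg.2 hlam0.le))
  have hkey := key0 (lam k) ((lam k)⁻¹) lam0⁻¹ α β δ
    ⟪u, e k⟫ ⟪v, e k⟫ ⟪w, e k⟫ hLt ht0 htl htl2 hk0.le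
  rw [inner_x e lam lam0 hlam0 hlam]
  calc lam k * (-γ⁻¹ * (β * ⟪u, e k⟫ + δ * ⟪v, e k⟫
          + (lam k)⁻¹ * (α * ⟪v, e k⟫ + ⟪w, e k⟫)))^2
      = γ⁻¹^2 * (lam k * (β * ⟪u, e k⟫ + δ * ⟪v, e k⟫
          + (lam k)⁻¹ * (α * ⟪v, e k⟫ + ⟪w, e k⟫))^2) := by ring
    _ ≤ γ⁻¹^2 * ((3*β^2)*(lam k * ⟪u, e k⟫^2)
          + (3*δ^2+6*α^2*lam0⁻¹^2)*(lam k * ⟪v, e k⟫^2)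
          + (6*lam0⁻¹)*⟪w, e k⟫^2) :=
        mul_le_mul_of_nonneg_left hkey (sq_nonneg _)
    _ = _ := by ring


end Helpers

set_option maxHeartbeats 2000000 in
/-- Zero belongs to the resolvent set of `𝔸`: the operator
`𝔸 : D(𝔸) → Y` is bijective, its inverse is given explicitly by
`𝔸⁻¹(u,v,w) = (-γ⁻¹(βu + δv + A⁻¹(αv + w)), u, v)`, and `𝔸⁻¹` is bounded on `Y`. -/
theorem zero_in_resolvent_set
    (e : HilbertBasis ℕ ℝ X) (lam : ℕ → ℝ) (lam0 : ℝ)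
    (hlam0 : 0 < lam0) (hlam : ∀ k, lam0 ≤ lam k)
    (α β γ δ : ℝ) (hα : 0 < α) (hβ : 0 < β) (hγ : 0 < γ) (hδ : 0 < δ) :
    -- surjectivity, with the explicit formula for the preimage:
    -- for every `(u,v,w) ∈ Y` the triple `((-γ⁻¹)•(βu+δv+A⁻¹(αv+w)), u, v)`
    -- belongs to `D(𝔸)` and is mapped by `𝔸` onto `(u,v,w)`
    (∀ u v w : X, memHalf e lam u → memHalf e lam v →
      memHalf e lam ((-γ⁻¹) • (β • u + δ • v + Ainv e lam (α • v + w))) ∧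
      memOne e lam
        (β • u + γ • ((-γ⁻¹) • (β • u + δ • v + Ainv e lam (α • v + w))) + δ • v) ∧
      (-α) • v - Aop e lam
        (β • u + γ • ((-γ⁻¹) • (β • u + δ • v + Ainv e lam (α • v + w))) + δ • v) = w) ∧
    -- injectivity of `𝔸` on `D(𝔸)`
    (∀ u₁ v₁ w₁ u₂ v₂ w₂ : X,
      memHalf e lam u₁ → memHalf e lam v₁ → memHalf e lam w₁ →
      memOne e lam (β • v₁ + γ • u₁ + δ • w₁) →
      memHalf e lam u₂ → memHalf e lam v₂ → memHalf e lam w₂ →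
      memOne e lam (β • v₂ + γ • u₂ + δ • w₂) →
      v₁ = v₂ → w₁ = w₂ →
      (-α) • w₁ - Aop e lam (β • v₁ + γ • u₁ + δ • w₁) =
        (-α) • w₂ - Aop e lam (β • v₂ + γ • u₂ + δ • w₂) →
      u₁ = u₂ ∧ v₁ = v₂ ∧ w₁ = w₂) ∧
    -- boundedness of `𝔸⁻¹` on `Y`
    (∃ C : ℝ, 0 < C ∧ ∀ u v w : X, memHalf e lam u → memHalf e lam v →
      Ynorm e lam ((-γ⁻¹) • (β • u + δ • v + Ainv e lam (α • v + w))) u v ≤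
        C * Ynorm e lam u v w) := by

  have hk0 : ∀ k, (0:ℝ) < lam k := fun k => lt_of_lt_of_le hlam0 (hlam k)
  set C1 : ℝ := γ⁻¹^2*(3*β^2) with hC1
  set C2 : ℝ := γ⁻¹^2*(3*δ^2+6*α^2*lam0⁻¹^2) with hC2
  set C3 : ℝ := γ⁻¹^2*(6*lam0⁻¹) with hC3
  have hC1n : 0 ≤ C1 := by positivity
  have hC2n : 0 ≤ C2 := by positivity
  have hC3n : 0 ≤ C3 := by positivity
  have hl0n : (0:ℝ) ≤ lam0⁻¹ := inv_nonneg.2 hlam0.le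
  have hxmem : ∀ u v w : X, memHalf e lam u → memHalf e lam v →
      memHalf e lam ((-γ⁻¹) • (β • u + δ • v + Ainv e lam (α • v + w))) := by
    intro u v w hu hv
    have hsum : Summable fun k => C1 * (lam k * ⟪u, e k⟫^2)
        + C2 * (lam k * ⟪v, e k⟫^2) + C3 * ⟪w, e k⟫^2 :=
      ((hu.mul_left C1).add (hv.mul_left C2)).add
        ((summable_coeffSq e w).mul_left C3)
    exact Summable.of_nonneg_of_le
      (fun k => mul_nonneg (hk0 k).le (sq_nonneg _))
      (fun k => xbound e lam lam0 hlam0 hlam α β γ δ hγ u v w k) hsum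
  refine ⟨?_, ?_, ?_⟩
  · -- surjectivity
    intro u v w hu hv
    have hzc : ∀ k, ⟪Ainv e lam (α • v + w), e k⟫
        = (lam k)⁻¹ * (α * ⟪v, e k⟫ + ⟪w, e k⟫) := fun k => by
      rw [inner_Ainv e lam lam0 hlam0 hlam, inner_add_left, real_inner_smul_left]
    have hT : β • u + γ • ((-γ⁻¹) • (β • u + δ • v + Ainv e lam (α • v + w))) + δ • v
        = -(Ainv e lam (α • v + w)) := by
      rw [smul_smul, mul_neg, mul_inv_cancel₀ hγ.ne', neg_one_smul]
      abel
    have hAop : Aop e lam (-(Ainv e lam (α • v + w))) = -(α • v + w) := by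
      unfold Aop
      have hfun : (fun k => (lam k * ⟪-(Ainv e lam (α • v + w)), e k⟫) • e k)
          = fun k => (-⟪α • v + w, e k⟫) • e k := by
        funext k
        congr 1
        rw [inner_neg_left, hzc k, inner_add_left, real_inner_smul_left]
        have hLt : lam k * (lam k)⁻¹ = 1 := mul_inv_cancel₀ (hk0 k).ne'
        linear_combination (-(α * ⟪v, e k⟫ + ⟪w, e k⟫)) * hLt
      rw [hfun]
      have hrep : HasSum (fun k => ⟪α • v + w, e k⟫ • e k) (α • v + w) := by
        have h := e.hasSum_repr (α • v + w)
        apply h.congr_fun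
        intro k
        rw [e.repr_apply_apply, real_inner_comm]
      have hneg := hrep.neg
      have h2 : (fun k => -(⟪α • v + w, e k⟫ • e k))
          = fun k => (-⟪α • v + w, e k⟫) • e k := by
        funext k; rw [neg_smul]
      rw [h2] at hneg
      exact hneg.tsum_eq
    refine ⟨hxmem u v w hu hv, ?_, ?_⟩
    · -- memOne
      rw [hT]
      apply (summable_coeffSq e (α • v + w)).congr
      intro k
      rw [inner_neg_left, hzc k, inner_add_left, real_inner_smul_left]
      have hLt : lam k * (lam k)⁻¹ = 1 := mul_inv_cancel₀ (hk0 k).ne'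
      linear_combination (-((α * ⟪v, e k⟫ + ⟪w, e k⟫)^2)
        * (lam k * (lam k)⁻¹ + 1)) * hLt
    · -- third component
      rw [hT, hAop]
      module
  · -- injectivity
    intro u₁ v₁ w₁ u₂ v₂ w₂ _ _ _ hone₁ _ _ _ hone₂ hv hw heq
    subst hv; subst hw
    refine ⟨?_, rfl, rfl⟩
    have hA : Aop e lam (β • v₁ + γ • u₁ + δ • w₁)
        = Aop e lam (β • v₁ + γ • u₂ + δ • w₁) := sub_right_inj.mp heq
    have hcoef : ∀ k, ⟪β • v₁ + γ • u₁ + δ • w₁, e k⟫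
        = ⟪β • v₁ + γ • u₂ + δ • w₁, e k⟫ := by
      intro k
      have h1 := inner_Aop e lam _ hone₁ k
      have h2 := inner_Aop e lam _ hone₂ k
      have h3 : lam k * ⟪β • v₁ + γ • u₁ + δ • w₁, e k⟫
          = lam k * ⟪β • v₁ + γ • u₂ + δ • w₁, e k⟫ := by
        rw [← h1, ← h2, hA]
      exact mul_left_cancel₀ (hk0 k).ne' h3
    have hφ := ext_inner_basis e hcoef
    have h3 := add_right_cancel hφ
    have h4 := add_left_cancel h3
    exact smul_right_injective X hγ.ne' h4
  · -- boundedness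
    set M : ℝ := C1 + C2 + C3 + lam0⁻¹ + 2 with hM
    have hM2 : (2:ℝ) ≤ M := by rw [hM]; linarith
    refine ⟨Real.sqrt M, Real.sqrt_pos.2 (by linarith), ?_⟩
    intro u v w hu hv
    have hx := hxmem u v w hu hv
    have hnU : 0 ≤ nHalfSq e lam u :=
      tsum_nonneg fun k => mul_nonneg (hk0 k).le (sq_nonneg _)
    have hnV : 0 ≤ nHalfSq e lam v :=
      tsum_nonneg fun k => mul_nonneg (hk0 k).le (sq_nonneg _)
    have hsum1 : Summable fun k => C1 * (lam k * ⟪u, e k⟫^2) := hu.mul_left C1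
    have hsum2 : Summable fun k => C2 * (lam k * ⟪v, e k⟫^2) := hv.mul_left C2
    have hsum3 : Summable fun k => C3 * ⟪w, e k⟫^2 :=
      (summable_coeffSq e w).mul_left C3
    have hb1 : nHalfSq e lam ((-γ⁻¹) • (β • u + δ • v + Ainv e lam (α • v + w)))
        ≤ C1 * nHalfSq e lam u + C2 * nHalfSq e lam v + C3 * ‖w‖^2 := by
      have hle := Summable.tsum_le_tsum
        (fun k => xbound e lam lam0 hlam0 hlam α β γ δ hγ u v w k)
        hx ((hsum1.add hsum2).add hsum3)
      calc nHalfSq e lam ((-γ⁻¹) • (β • u + δ • v + Ainv e lam (α • v + w)))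
          ≤ ∑' k, (C1 * (lam k * ⟪u, e k⟫^2)
              + C2 * (lam k * ⟪v, e k⟫^2) + C3 * ⟪w, e k⟫^2) := hle
        _ = C1 * nHalfSq e lam u + C2 * nHalfSq e lam v + C3 * ‖w‖^2 := by
            rw [Summable.tsum_add (hsum1.add hsum2) hsum3, Summable.tsum_add hsum1 hsum2,
              tsum_mul_left, tsum_mul_left, tsum_mul_left,
              (hasSum_coeffSq e w).tsum_eq]
            rfl
    have hv2 : ‖v‖^2 ≤ lam0⁻¹ * nHalfSq e lam v := by
      have hpt : ∀ k, ⟪v, e k⟫^2 ≤ lam0⁻¹ * (lam k * ⟪v, e k⟫^2) := by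
        intro k
        have h5 : (1:ℝ) ≤ lam0⁻¹ * lam k := by
          calc (1:ℝ) = lam0⁻¹ * lam0 := (inv_mul_cancel₀ hlam0.ne').symm
            _ ≤ lam0⁻¹ * lam k := mul_le_mul_of_nonneg_left (hlam k) hl0n
        nlinarith [sq_nonneg ⟪v, e k⟫]
      have hle := Summable.tsum_le_tsum hpt (summable_coeffSq e v) (hv.mul_left lam0⁻¹)
      rw [(hasSum_coeffSq e v).tsum_eq, tsum_mul_left] at hle
      exact hle
    have key : nHalfSq e lam ((-γ⁻¹) • (β • u + δ • v + Ainv e lam (α • v + w)))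
        + nHalfSq e lam u + ‖v‖^2
        ≤ M * (nHalfSq e lam u + nHalfSq e lam v + ‖w‖^2) := by
      have e1 : (C1+1) * nHalfSq e lam u ≤ M * nHalfSq e lam u :=
        mul_le_mul_of_nonneg_right (by rw [hM]; linarith) hnU
      have e2 : (C2+lam0⁻¹) * nHalfSq e lam v ≤ M * nHalfSq e lam v :=
        mul_le_mul_of_nonneg_right (by rw [hM]; linarith) hnV
      have e3 : C3 * ‖w‖^2 ≤ M * ‖w‖^2 :=
        mul_le_mul_of_nonneg_right (by rw [hM]; linarith) (sq_nonneg _)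
      nlinarith [hb1, hv2, e1, e2, e3]
    unfold Ynorm
    calc Real.sqrt (nHalfSq e lam ((-γ⁻¹) • (β • u + δ • v + Ainv e lam (α • v + w)))
          + nHalfSq e lam u + ‖v‖^2)
        ≤ Real.sqrt (M * (nHalfSq e lam u + nHalfSq e lam v + ‖w‖^2)) :=
          Real.sqrt_le_sqrt key
      _ = Real.sqrt M * Real.sqrt (nHalfSq e lam u + nHalfSq e lam v + ‖w‖^2) :=
          Real.sqrt_mul (by linarith) _
end
end

section
/- Assume in addition that X is infinite-dimensional. Then the bounded linear map 𝔸⁻¹ : Y → Y, (u,v,w) ↦ ( −γ⁻¹(βu + δv + A⁻¹(αv + w)), u, v ), is not a compact operator; i.e., there is a bounded sequence in Y whose image under 𝔸⁻¹ has no convergent subsequence in Y. -/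
open Filter Topology

noncomputable section

local notation "⟪" x ", " y "⟫" => @inner ℝ _ _ x y

variable {X : Type*} [NormedAddCommGroup X] [InnerProductSpace ℝ X] [CompleteSpace X]

/-- If `X` is infinite dimensional, the bounded linear map
`𝔸⁻¹ : Y → Y`, `(u,v,w) ↦ (-γ⁻¹(βu + δv + A⁻¹(αv + w)), u, v)`, is not compact:
there is a bounded sequence in `Y` whose image under `𝔸⁻¹` has no subsequence
converging in `Y`. -/
theorem inverse_not_compact
    (e : HilbertBasis ℕ ℝ X) (lam : ℕ → ℝ) (lam0 : ℝ)
    (hlam0 : 0 < lam0) (hlam : ∀ k, lam0 ≤ lam k)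
    (hinf : ¬ FiniteDimensional ℝ X)
    (α β γ δ : ℝ) (hα : 0 < α) (hβ : 0 < β) (hγ : 0 < γ) (hδ : 0 < δ) :
    ∃ u v w : ℕ → X,
      -- the sequence lies in `Y` and is bounded in `Y`
      (∀ n, memHalf e lam (u n) ∧ memHalf e lam (v n)) ∧
      (∃ M : ℝ, ∀ n, Ynorm e lam (u n) (v n) (w n) ≤ M) ∧
      -- no subsequence of the image sequence `𝔸⁻¹(uₙ,vₙ,wₙ)` converges in `Y`
      (∀ k : ℕ → ℕ, StrictMono k → ∀ p q r : X, memHalf e lam p → memHalf e lam q →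
        ¬ Tendsto (fun n => Ynorm e lam
            (((-γ⁻¹) • (β • u (k n) + δ • v (k n) + Ainv e lam (α • v (k n) + w (k n)))) - p)
            (u (k n) - q) (v (k n) - r)) atTop (𝓝 0)) := by
  have hpos : ∀ m, (0:ℝ) < lam m := fun m => lt_of_lt_of_le hlam0 (hlam m)
  set s : ℕ → ℝ := fun m => Real.sqrt (lam m) with hs
  have hspos : ∀ m, 0 < s m := fun m => Real.sqrt_pos.2 (hpos m)
  have hssq : ∀ m, s m ^ 2 = lam m := fun m => Real.sq_sqrt (hpos m).le
  have hsmul : ∀ m j, ⟪(s m)⁻¹ • (e m : X), e j⟫ = (s m)⁻¹ * (if m = j then 1 else 0) := by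
    intro m j
    rw [real_inner_smul_left, orthonormal_iff_ite.mp e.orthonormal]
  refine ⟨fun n => (s n)⁻¹ • e n, fun _ => 0, fun _ => 0, ?_, ?_, ?_⟩
  · intro n
    constructor
    · apply summable_of_ne_finset_zero (s := {n})
      intro j hj
      rw [hsmul]
      rw [if_neg (fun h => hj (by simp [h]))]
      ring
    · have h0 : (fun j => lam j * ⟪(0:X), e j⟫ ^ 2) = fun _ => 0 := by
        funext j; simp
      unfold memHalf
      rw [h0]
      exact summable_zero
  · refine ⟨1, fun n => ?_⟩
    have h1 : nHalfSq e lam ((s n)⁻¹ • e n) = 1 := by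
      unfold nHalfSq
      rw [tsum_eq_single n]
      · rw [hsmul, if_pos rfl]
        have := hssq n
        have := (hspos n).ne'
        field_simp
        nlinarith [hssq n]
      · intro b hb
        rw [hsmul, if_neg (fun h => hb (by simp [h]))]
        ring
    have h2 : nHalfSq e lam (0 : X) = 0 := by
      unfold nHalfSq
      simp
    unfold Ynorm
    rw [h1, h2]
    simp
  · intro k hk p q r hp hq htend
    set qc : ℕ → ℝ := fun j => ⟪q, e j⟫ with hqc
    have h0 : Tendsto (fun m => lam m * qc m ^ 2) atTop (𝓝 0) := hq.tendsto_atTop_zero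
    have hev : ∀ᶠ m in atTop, lam m * qc m ^ 2 < 1/4 :=
      h0.eventually (gt_mem_nhds (by norm_num : (0:ℝ) < 1/4))
    -- summability of the series for nHalfSq (u m - q)
    have hsum : ∀ m, Summable (fun j => lam j * ⟪(s m)⁻¹ • e m - q, e j⟫ ^ 2) := by
      intro m
      have h1 : Summable (fun j => lam j * ((s m)⁻¹ * (if m = j then 1 else 0)) ^ 2 * 2) := by
        apply summable_of_ne_finset_zero (s := {m})
        intro j hj
        rw [if_neg (fun h => hj (by simp [h]))]
        ring
      have hb : Summable (fun j => lam j * ((s m)⁻¹ * (if m = j then 1 else 0)) ^ 2 * 2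
          + lam j * qc j ^ 2 * 2) := h1.add (hq.mul_right 2)
      apply hb.of_nonneg_of_le
      · intro j
        have := (hpos j).le
        positivity
      · intro j
        rw [inner_sub_left, hsmul]
        have hqcj : ⟪q, e j⟫ = qc j := rfl
        rw [hqcj]
        nlinarith [mul_nonneg (hpos j).le (sq_nonneg ((s m)⁻¹ * (if m = j then 1 else 0) + qc j))]
    have hterm : ∀ m, lam m * ((s m)⁻¹ - qc m) ^ 2 ≤ nHalfSq e lam ((s m)⁻¹ • e m - q) := by
      intro m
      have h := Summable.le_tsum (hsum m) m (fun j _ => by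
        have := (hpos j).le
        positivity)
      have heq : ⟪(s m)⁻¹ • e m - q, e m⟫ = (s m)⁻¹ - qc m := by
        rw [inner_sub_left, hsmul, if_pos rfl]
        ring_nf
        rfl
      rw [heq] at h
      exact h
    -- eventually the Ynorm is ≥ 1/2
    have hev2 : ∀ᶠ n in atTop, lam (k n) * qc (k n) ^ 2 < 1/4 :=
      hk.tendsto_atTop.eventually hev
    have hge : ∀ᶠ n in atTop, (1:ℝ)/2 ≤ Ynorm e lam
        (((-γ⁻¹) • (β • ((s (k n))⁻¹ • e (k n)) + δ • (0:X)
          + Ainv e lam (α • (0:X) + (0:X)))) - p)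
        (((s (k n))⁻¹ • e (k n)) - q) ((0:X) - r) := by
      filter_upwards [hev2] with n hn
      set m := k n
      have hA : (0:ℝ) ≤ nHalfSq e lam
          (((-γ⁻¹) • (β • ((s m)⁻¹ • e m) + δ • (0:X)
            + Ainv e lam (α • (0:X) + (0:X)))) - p) := by
        apply tsum_nonneg
        intro j
        have := (hpos j).le
        positivity
      have hC : (0:ℝ) ≤ ‖(0:X) - r‖ ^ 2 := sq_nonneg _
      have hB : (1:ℝ)/4 ≤ nHalfSq e lam (((s m)⁻¹ • e m) - q) := by
        refine le_trans ?_ (hterm m)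
        have key : lam m * ((s m)⁻¹ - qc m) ^ 2 = (1 - s m * qc m) ^ 2 := by
          have h1 : s m * (s m)⁻¹ = 1 := mul_inv_cancel₀ (hspos m).ne'
          have h2 : lam m * ((s m)⁻¹ - qc m) ^ 2 = (s m * ((s m)⁻¹ - qc m)) ^ 2 := by
            rw [mul_pow, hssq m]
          rw [h2, mul_sub, h1]
        rw [key]
        have ht : (s m * qc m) ^ 2 < 1/4 := by
          have : (s m * qc m) ^ 2 = lam m * qc m ^ 2 := by rw [mul_pow, hssq m]
          linarith [hn, this.le, this.ge]
        nlinarith [sq_nonneg (1 - 2 * (s m * qc m))]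
      unfold Ynorm
      rw [show (1:ℝ)/2 = Real.sqrt (1/4) by
        rw [show (1:ℝ)/4 = (1/2)^2 by norm_num, Real.sqrt_sq (by norm_num)]]
      apply Real.sqrt_le_sqrt
      linarith
    have hlt := htend.eventually (gt_mem_nhds (by norm_num : (0:ℝ) < 1/2))
    obtain ⟨n, h1, h2⟩ := (hge.and hlt).exists
    linarith
end
end

section
/- Zero belongs to the resolvent set of the extrapolated operator: the map 𝔸₋ : X^{1/2} × X^{1/2} × X^{1/2} → Y₋ defined by 𝔸₋(u,v,w) = (v, w, −α ι(w) − A₋(βv + γu + δw)) is bijective onto Y₋, and there exists a constant C > 0 such that its inverse satisfies ‖𝔸₋⁻¹(u,v,c)‖_{Y₋} ≤ C ‖(u,v,c)‖_{Y₋} for all (u,v,c) ∈ Y₋. -/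
open Filter Topology

noncomputable section

local notation "⟪" x ", " y "⟫" => @inner ℝ _ _ x y

variable {X : Type*} [NormedAddCommGroup X] [InnerProductSpace ℝ X] [CompleteSpace X]

/-- Membership in the extrapolated sequence space `X^{-1/2}`. -/
def memNegSeq (lam : ℕ → ℝ) (c : ℕ → ℝ) : Prop :=
  Summable fun k => (lam k)⁻¹ * c k ^ 2

/-- The squared `X^{-1/2}`-norm of a sequence. -/
def nNegSeqSq (lam : ℕ → ℝ) (c : ℕ → ℝ) : ℝ :=
  ∑' k, (lam k)⁻¹ * c k ^ 2

/-- The extrapolated operator `A₋ : X^{1/2} → X^{-1/2}`, `(A₋φ)_k = λ_k ⟨φ,e_k⟩`. -/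
def Aminus (e : HilbertBasis ℕ ℝ X) (lam : ℕ → ℝ) (φ : X) : ℕ → ℝ :=
  fun k => lam k * ⟪φ, e k⟫

/-- The embedding `ι : X → X^{-1/2}`, `ι(w) = (⟨w,e_k⟩)_k`. -/
def iotaX (e : HilbertBasis ℕ ℝ X) (w : X) : ℕ → ℝ :=
  fun k => ⟪w, e k⟫

/-- `(x+y+z+t)² ≤ 4(x²+y²+z²+t²)`. -/
lemma MGT_four_sq (x y z t : ℝ) : (x+y+z+t)^2 ≤ 4*(x^2+y^2+z^2+t^2) := by
  nlinarith [sq_nonneg (x-y), sq_nonneg (x-z), sq_nonneg (x-t), sq_nonneg (y-z),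
    sq_nonneg (y-t), sq_nonneg (z-t)]

/-- Key pointwise estimate for the inverse bound. -/
lemma MGT_key_ineq (lam0 α β γ δ l a b d c : ℝ) (h0 : 0 < lam0) (hl : lam0 ≤ l)
    (hγ : 0 < γ)
    (hc : c = -α * d - l * (β * b + γ * a + δ * d)) :
    l * a ^ 2 + l * b ^ 2 + l⁻¹ * d ^ 2 ≤
      ((γ^2*lam0^2 + γ^2 + 4*lam0^2 + 4*α^2 + 4*β^2*lam0^2 + 4*δ^2*lam0^2) / (γ^2*lam0^2)) *
        (l * b ^ 2 + l * d ^ 2 + l⁻¹ * c ^ 2) := by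
  have hlpos : 0 < l := h0.trans_le hl
  set M : ℝ := γ^2*lam0^2 + γ^2 + 4*lam0^2 + 4*α^2 + 4*β^2*lam0^2 + 4*δ^2*lam0^2 with hM
  have h4 : (c + α*d + l*(β*b) + l*(δ*d))^2 ≤ 4*(c^2 + (α*d)^2 + (l*(β*b))^2 + (l*(δ*d))^2) :=
    MGT_four_sq _ _ _ _
  have hceq : c + α*d + l*(β*b) + l*(δ*d) = -(l*(γ*a)) := by rw [hc]; ring
  rw [hceq] at h4
  have hsq : lam0^2 ≤ l^2 := by nlinarith
  have hdd : lam0^2*d^2 ≤ l^2*d^2 := mul_le_mul_of_nonneg_right hsq (sq_nonneg d)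
  have hG : γ^2*lam0^2*(l^2*a^2 + l^2*b^2 + d^2) ≤ M*(l^2*b^2 + l^2*d^2 + c^2) := by
    nlinarith [mul_le_mul_of_nonneg_left h4 (sq_nonneg lam0),
      mul_le_mul_of_nonneg_left hdd (sq_nonneg γ),
      mul_le_mul_of_nonneg_left hdd (mul_nonneg (by norm_num : (0:ℝ) ≤ 4) (sq_nonneg α)),
      mul_nonneg (mul_nonneg (sq_nonneg γ) (sq_nonneg lam0)) (sq_nonneg c),
      mul_nonneg (sq_nonneg γ) (sq_nonneg c),
      mul_nonneg (sq_nonneg α) (sq_nonneg c),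
      mul_nonneg (mul_nonneg (sq_nonneg β) (sq_nonneg lam0)) (sq_nonneg c),
      mul_nonneg (mul_nonneg (sq_nonneg δ) (sq_nonneg lam0)) (sq_nonneg c),
      mul_nonneg (sq_nonneg γ) (sq_nonneg (l*b)),
      mul_nonneg (sq_nonneg lam0) (sq_nonneg (l*b)),
      mul_nonneg (sq_nonneg α) (sq_nonneg (l*b)),
      mul_nonneg (mul_nonneg (sq_nonneg δ) (sq_nonneg lam0)) (sq_nonneg (l*b)),
      mul_nonneg (mul_nonneg (sq_nonneg γ) (sq_nonneg lam0)) (sq_nonneg (l*d)),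
      mul_nonneg (sq_nonneg lam0) (sq_nonneg (l*d)),
      mul_nonneg (mul_nonneg (sq_nonneg β) (sq_nonneg lam0)) (sq_nonneg (l*d))]
  have hpos : 0 < γ^2*lam0^2*l := by positivity
  rw [← mul_le_mul_iff_right₀ hpos]
  have h1 : (γ:ℝ)^2*lam0^2 ≠ 0 := by positivity
  have h2 : l ≠ 0 := ne_of_gt hlpos
  have e1 : γ^2*lam0^2*l * (l*a^2 + l*b^2 + l⁻¹*d^2)
      = γ^2*lam0^2*(l^2*a^2 + l^2*b^2 + d^2) := by
    field_simp
  have e2 : γ^2*lam0^2*l * (M/(γ^2*lam0^2) * (l*b^2 + l*d^2 + l⁻¹*c^2))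
      = M*(l^2*b^2 + l^2*d^2 + c^2) := by
    field_simp
  rw [e1, e2]; exact hG

/-- Pointwise estimate for summability of `λ⁻¹ c²`. -/
lemma MGT_keyc_ineq (lam0 α β γ δ l a b d c : ℝ) (h0 : 0 < lam0) (hl : lam0 ≤ l)
    (hc : c = -α * d - l * (β * b + γ * a + δ * d)) :
    l⁻¹ * c ^ 2 ≤ (4*α^2/lam0^2)*(l*d^2) + (4*β^2)*(l*b^2) + (4*γ^2)*(l*a^2) + (4*δ^2)*(l*d^2) := by
  have hlpos : 0 < l := h0.trans_le hl
  have h4 : (α*d + l*(β*b) + l*(γ*a) + l*(δ*d))^2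
      ≤ 4*((α*d)^2 + (l*(β*b))^2 + (l*(γ*a))^2 + (l*(δ*d))^2) := MGT_four_sq _ _ _ _
  have hceq : c^2 = (α*d + l*(β*b) + l*(γ*a) + l*(δ*d))^2 := by rw [hc]; ring
  have hsq : lam0^2 ≤ l^2 := by nlinarith
  have hdd : lam0^2*d^2 ≤ l^2*d^2 := mul_le_mul_of_nonneg_right hsq (sq_nonneg d)
  have hpos : 0 < lam0^2*l := by positivity
  rw [← mul_le_mul_iff_right₀ hpos]
  have h1 : (lam0:ℝ)^2 ≠ 0 := by positivity
  have h2 : l ≠ 0 := ne_of_gt hlpos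
  have e1 : lam0^2*l*(l⁻¹*c^2) = lam0^2*c^2 := by field_simp
  have e2 : lam0^2*l*((4*α^2/lam0^2)*(l*d^2) + (4*β^2)*(l*b^2) + (4*γ^2)*(l*a^2) + (4*δ^2)*(l*d^2))
      = 4*α^2*(l^2*d^2) + lam0^2*((4*β^2)*(l^2*b^2) + (4*γ^2)*(l^2*a^2) + (4*δ^2)*(l^2*d^2)) := by
    field_simp; ring_nf; try tauto
  rw [e1, e2]
  nlinarith [mul_le_mul_of_nonneg_left h4 (sq_nonneg lam0),
    mul_le_mul_of_nonneg_left hdd (mul_nonneg (by norm_num : (0:ℝ) ≤ 4) (sq_nonneg α))]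

/-- Pointwise estimate `λ⁻¹ d² ≤ λ d² / λ0²`. -/
lemma MGT_keyd_ineq (lam0 l d : ℝ) (h0 : 0 < lam0) (hl : lam0 ≤ l) :
    l⁻¹ * d ^ 2 ≤ (1/lam0^2) * (l * d^2) := by
  have hlpos : 0 < l := h0.trans_le hl
  have hpos : 0 < lam0^2*l := by positivity
  rw [← mul_le_mul_iff_right₀ hpos]
  have h1 : (lam0:ℝ)^2 ≠ 0 := by positivity
  have h2 : l ≠ 0 := ne_of_gt hlpos
  have e1 : lam0^2*l*(l⁻¹*d^2) = lam0^2*d^2 := by field_simp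
  have e2 : lam0^2*l*((1/lam0^2)*(l*d^2)) = l^2*d^2 := by field_simp
  rw [e1, e2]
  have hsq : lam0^2 ≤ l^2 := by nlinarith
  exact mul_le_mul_of_nonneg_right hsq (sq_nonneg d)

/-- Zero belongs to the resolvent set of the extrapolated
operator: `𝔸₋(u,v,w) = (v, w, -α ι(w) - A₋(βv + γu + δw))`, defined on
`X^{1/2} × X^{1/2} × X^{1/2}`, is a bijection onto
`Y₋ = X^{1/2} × X^{1/2} × X^{-1/2}` whose inverse is bounded:
`‖𝔸₋⁻¹ y‖_{Y₋} ≤ C ‖y‖_{Y₋}` for some `C > 0`. -/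
theorem zero_in_resolvent_set_extrapolated
    (e : HilbertBasis ℕ ℝ X) (lam : ℕ → ℝ) (lam0 : ℝ)
    (hlam0 : 0 < lam0) (hlam : ∀ k, lam0 ≤ lam k)
    (α β γ δ : ℝ) (hα : 0 < α) (hβ : 0 < β) (hγ : 0 < γ) (hδ : 0 < δ) :
    -- injectivity of `𝔸₋` on its domain `X^{1/2} × X^{1/2} × X^{1/2}`
    (∀ u₁ v₁ w₁ u₂ v₂ w₂ : X,
      memHalf e lam u₁ → memHalf e lam v₁ → memHalf e lam w₁ →
      memHalf e lam u₂ → memHalf e lam v₂ → memHalf e lam w₂ →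
      v₁ = v₂ → w₁ = w₂ →
      (-α) • iotaX e w₁ - Aminus e lam (β • v₁ + γ • u₁ + δ • w₁) =
        (-α) • iotaX e w₂ - Aminus e lam (β • v₂ + γ • u₂ + δ • w₂) →
      u₁ = u₂ ∧ v₁ = v₂ ∧ w₁ = w₂) ∧
    -- surjectivity of `𝔸₋` onto `Y₋ = X^{1/2} × X^{1/2} × X^{-1/2}`
    (∀ (p q : X) (c : ℕ → ℝ), memHalf e lam p → memHalf e lam q → memNegSeq lam c →
      ∃ u v w : X, memHalf e lam u ∧ memHalf e lam v ∧ memHalf e lam w ∧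
        v = p ∧ w = q ∧
        (-α) • iotaX e w - Aminus e lam (β • v + γ • u + δ • w) = c) ∧
    -- boundedness of the inverse `𝔸₋⁻¹` on `Y₋`
    (∃ C : ℝ, 0 < C ∧ ∀ u v w : X,
      memHalf e lam u → memHalf e lam v → memHalf e lam w →
      Real.sqrt (nHalfSq e lam u + nHalfSq e lam v + nNegSeqSq lam (iotaX e w)) ≤
        C * Real.sqrt (nHalfSq e lam v + nHalfSq e lam w +
          nNegSeqSq lam ((-α) • iotaX e w - Aminus e lam (β • v + γ • u + δ • w)))) := by
  have hlk : ∀ k, 0 < lam k := fun k => hlam0.trans_le (hlam k)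
  set K : ℝ := (γ^2*lam0^2 + γ^2 + 4*lam0^2 + 4*α^2 + 4*β^2*lam0^2 + 4*δ^2*lam0^2) /
      (γ^2*lam0^2) with hKdef
  have hK : 0 < K := by positivity
  -- coordinates of the third component of `𝔸₋(u,v,w)`
  have hcoord : ∀ (u v w : X) (k : ℕ),
      ((-α) • iotaX e w - Aminus e lam (β • v + γ • u + δ • w)) k
        = -α * ⟪w, e k⟫ - lam k * (β * ⟪v, e k⟫ + γ * ⟪u, e k⟫ + δ * ⟪w, e k⟫) := by
    intro u v w k
    simp [iotaX, Aminus, Pi.sub_apply, Pi.smul_apply, smul_eq_mul, inner_add_left,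
      real_inner_smul_left]
  refine ⟨?_, ?_, ?_⟩
  · -- injectivity
    intro u₁ v₁ w₁ u₂ v₂ w₂ _ _ _ _ _ _ hv hw heq
    subst hv; subst hw
    refine ⟨?_, rfl, rfl⟩
    have hco : ∀ k, ⟪u₁, e k⟫ = ⟪u₂, e k⟫ := by
      intro k
      have hk := congrFun heq k
      rw [hcoord, hcoord] at hk
      have h3 : γ * lam k * ⟪u₁, e k⟫ = γ * lam k * ⟪u₂, e k⟫ := by
        linear_combination (-1 : ℝ) * hk
      exact mul_left_cancel₀ (ne_of_gt (mul_pos hγ (hlk k))) h3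
    apply e.repr.injective
    ext k
    rw [e.repr_apply_apply, e.repr_apply_apply, real_inner_comm, hco k, real_inner_comm]
  · -- surjectivity
    intro p q c hp hq hc
    set a : ℕ → ℝ :=
      fun k => -(c k + α*⟪q, e k⟫ + lam k*(β*⟪p, e k⟫ + δ*⟪q, e k⟫))/(γ*lam k) with ha
    have hck : ∀ k, c k = -α*⟪q, e k⟫ - lam k*(β*⟪p, e k⟫ + γ*(a k) + δ*⟪q, e k⟫) := by
      intro k
      have hne : γ * lam k ≠ 0 := ne_of_gt (mul_pos hγ (hlk k))
      have hl : lam k ≠ 0 := ne_of_gt (hlk k)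
      rw [ha]
      field_simp
      ring
    -- summability of `λ a²`
    have hSa : Summable fun k => lam k * (a k) ^ 2 := by
      apply Summable.of_nonneg_of_le
        (fun k => mul_nonneg (hlk k).le (sq_nonneg _))
        (fun k => ?_)
        (((hp.add hq).add hc).mul_left K)
      have hb := MGT_key_ineq lam0 α β γ δ (lam k) (a k) ⟪p, e k⟫ ⟪q, e k⟫ (c k)
        hlam0 (hlam k) hγ (hck k)
      rw [← hKdef] at hb
      have h1 : 0 ≤ lam k * ⟪p, e k⟫ ^ 2 := mul_nonneg (hlk k).le (sq_nonneg _)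
      have h2 : 0 ≤ (lam k)⁻¹ * ⟪q, e k⟫ ^ 2 :=
        mul_nonneg (inv_nonneg.2 (hlk k).le) (sq_nonneg _)
      linarith
    -- summability of `a²`, hence `a ∈ ℓ²`
    have hSa2 : Summable fun k => (a k) ^ 2 := by
      apply Summable.of_nonneg_of_le (fun k => sq_nonneg _) (fun k => ?_)
        (hSa.mul_left lam0⁻¹)
      have h := mul_le_mul_of_nonneg_right (hlam k) (sq_nonneg (a k))
      calc (a k)^2 = lam0⁻¹*(lam0*(a k)^2) := by field_simp
        _ ≤ lam0⁻¹*(lam k*(a k)^2) :=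
          mul_le_mul_of_nonneg_left h (inv_nonneg.2 hlam0.le)
    have hm : Memℓp a 2 := memℓp_gen (by simpa [Real.norm_eq_abs, sq_abs] using hSa2)
    set u : X := e.repr.symm ⟨a, hm⟩ with hu
    have hua : ∀ k, ⟪u, e k⟫ = a k := by
      intro k
      rw [real_inner_comm, ← e.repr_apply_apply]
      simp [hu]
    refine ⟨u, p, q, ?_, hp, hq, rfl, rfl, ?_⟩
    · unfold memHalf
      simp only [hua]
      exact hSa
    · funext k
      rw [hcoord, hua k]
      exact (hck k).symm
  · -- boundedness of the inverse
    refine ⟨Real.sqrt K, Real.sqrt_pos.mpr hK, ?_⟩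
    intro u v w hu hv hw
    set cs : ℕ → ℝ := (-α) • iotaX e w - Aminus e lam (β • v + γ • u + δ • w) with hcs
    have hckk : ∀ k, cs k
        = -α * ⟪w, e k⟫ - lam k * (β * ⟪v, e k⟫ + γ * ⟪u, e k⟫ + δ * ⟪w, e k⟫) :=
      hcoord u v w
    -- summability of the negative-norm pieces
    have hnw : Summable fun k => (lam k)⁻¹ * ⟪w, e k⟫ ^ 2 := by
      apply Summable.of_nonneg_of_le
        (fun k => mul_nonneg (inv_nonneg.2 (hlk k).le) (sq_nonneg _))
        (fun k => MGT_keyd_ineq lam0 (lam k) ⟪w, e k⟫ hlam0 (hlam k))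
        (hw.mul_left (1/lam0^2))
    have hnc : Summable fun k => (lam k)⁻¹ * (cs k) ^ 2 := by
      apply Summable.of_nonneg_of_le
        (fun k => mul_nonneg (inv_nonneg.2 (hlk k).le) (sq_nonneg _))
        (fun k => MGT_keyc_ineq lam0 α β γ δ (lam k) ⟪u, e k⟫ ⟪v, e k⟫ ⟪w, e k⟫ (cs k)
          hlam0 (hlam k) (hckk k))
        (((((hw.mul_left _).add (hv.mul_left _)).add (hu.mul_left _)).add (hw.mul_left _)))
    have hF : Summable fun k =>
        lam k * ⟪u, e k⟫ ^ 2 + lam k * ⟪v, e k⟫ ^ 2 + (lam k)⁻¹ * ⟪w, e k⟫ ^ 2 :=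
      (hu.add hv).add hnw
    have hG : Summable fun k =>
        lam k * ⟪v, e k⟫ ^ 2 + lam k * ⟪w, e k⟫ ^ 2 + (lam k)⁻¹ * (cs k) ^ 2 :=
      (hv.add hw).add hnc
    have hFG : (∑' k, (lam k * ⟪u, e k⟫ ^ 2 + lam k * ⟪v, e k⟫ ^ 2 +
          (lam k)⁻¹ * ⟪w, e k⟫ ^ 2))
        ≤ K * ∑' k, (lam k * ⟪v, e k⟫ ^ 2 + lam k * ⟪w, e k⟫ ^ 2 +
          (lam k)⁻¹ * (cs k) ^ 2) := by
      rw [← tsum_mul_left]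
      apply Summable.tsum_le_tsum (fun k => ?_) hF (hG.mul_left K)
      have hb := MGT_key_ineq lam0 α β γ δ (lam k) ⟪u, e k⟫ ⟪v, e k⟫ ⟪w, e k⟫ (cs k)
        hlam0 (hlam k) hγ (hckk k)
      rw [← hKdef] at hb
      exact hb
    have eL : nHalfSq e lam u + nHalfSq e lam v + nNegSeqSq lam (iotaX e w)
        = ∑' k, (lam k * ⟪u, e k⟫ ^ 2 + lam k * ⟪v, e k⟫ ^ 2 +
          (lam k)⁻¹ * ⟪w, e k⟫ ^ 2) := by
      rw [nHalfSq, nHalfSq, nNegSeqSq, Summable.tsum_add (hu.add hv) hnw, Summable.tsum_add hu hv]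
      rfl
    have eR : nHalfSq e lam v + nHalfSq e lam w + nNegSeqSq lam cs
        = ∑' k, (lam k * ⟪v, e k⟫ ^ 2 + lam k * ⟪w, e k⟫ ^ 2 +
          (lam k)⁻¹ * (cs k) ^ 2) := by
      rw [nHalfSq, nHalfSq, nNegSeqSq, Summable.tsum_add (hv.add hw) hnc, Summable.tsum_add hv hw]
    rw [eL, eR]
    calc Real.sqrt (∑' k, (lam k * ⟪u, e k⟫ ^ 2 + lam k * ⟪v, e k⟫ ^ 2 +
          (lam k)⁻¹ * ⟪w, e k⟫ ^ 2))
        ≤ Real.sqrt (K * ∑' k, (lam k * ⟪v, e k⟫ ^ 2 + lam k * ⟪w, e k⟫ ^ 2 +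
          (lam k)⁻¹ * (cs k) ^ 2)) := Real.sqrt_le_sqrt hFG
      _ = Real.sqrt K * Real.sqrt (∑' k, (lam k * ⟪v, e k⟫ ^ 2 + lam k * ⟪w, e k⟫ ^ 2 +
          (lam k)⁻¹ * (cs k) ^ 2)) := Real.sqrt_mul hK.le _
end
end
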